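/- Let n ≥ 1, μ > 0, and let Φ be a map from symmetric n×n real matrices to symmetric n×n real matrices with the spectral property: for every symmetric M, every orthogonal P, and every d ∈ ℝ^n with M = P·Diag(d)·Pᵀ, one has Φ(M) = P·Diag(φ_μ(d₁),…,φ_μ(d_n))·Pᵀ (such a Φ is well defined and unique). Fix a symmetric X with orthogonal eigendecomposition X = P·Diag(d)·Pᵀ, and define Ω ∈ S^n by Ω_{ij} = (φ_μ(d_i) + φ_μ(d_j))/(√(d_i² + 4μ) + √(d_j² + 4μ)). Then Φ is Fréchet differentiable at X within the subspace of symmetric matrices, with derivative given by the linear map H ↦ P(Ω ∘ (PᵀHP))Pᵀ for symmetric H, where ∘ denotes the Hadamard (entrywise) product: i.e., ‖Φ(X + H) − Φ(X) − P(Ω ∘ (PᵀHP))Pᵀ‖_F / ‖H‖_F → 0 as symmetric H → 0. -/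

import Mathlib

open Matrix

/-- The scalar function `φ_μ(t) = (√(t² + 4μ) + t)/2`. -/
noncomputable def phiMu (μ t : ℝ) : ℝ := (Real.sqrt (t ^ 2 + 4 * μ) + t) / 2

/-- The Frobenius norm `‖M‖_F = √(Σ_{ij} M_{ij}²)`. -/
noncomputable def frob {n : ℕ} (M : Matrix (Fin n) (Fin n) ℝ) : ℝ :=
  Real.sqrt (∑ i : Fin n, ∑ j : Fin n, (M i j) ^ 2)

lemma frob_nonneg {n : ℕ} (M : Matrix (Fin n) (Fin n) ℝ) : 0 ≤ frob M := Real.sqrt_nonneg _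

lemma frob_sq {n : ℕ} (M : Matrix (Fin n) (Fin n) ℝ) :
    frob M ^ 2 = ∑ i : Fin n, ∑ j : Fin n, (M i j) ^ 2 := Real.sq_sqrt (by positivity)

lemma frob_mono {n : ℕ} {A B : Matrix (Fin n) (Fin n) ℝ}
    (h : ∀ i j, |A i j| ≤ |B i j|) : frob A ≤ frob B := by
  apply Real.sqrt_le_sqrt
  refine Finset.sum_le_sum fun i _ => Finset.sum_le_sum fun j _ => ?_
  rw [← sq_abs (A i j), ← sq_abs (B i j)]
  exact pow_le_pow_left₀ (abs_nonneg _) (h i j) 2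

lemma frob_pos {n : ℕ} {M : Matrix (Fin n) (Fin n) ℝ} (h : M ≠ 0) : 0 < frob M := by
  rw [frob, Real.sqrt_pos]
  obtain ⟨i, j, hij⟩ : ∃ i j, M i j ≠ 0 := by
    by_contra hc
    push_neg at hc
    exact h (by ext i j; simpa using hc i j)
  have : (0:ℝ) < M i j ^ 2 := by positivity
  calc (0:ℝ) < M i j ^ 2 := this
    _ ≤ ∑ j' : Fin n, M i j' ^ 2 :=
        Finset.single_le_sum (f := fun j' => M i j' ^ 2) (fun k _ => sq_nonneg _)
          (Finset.mem_univ j)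
    _ ≤ ∑ i' : Fin n, ∑ j' : Fin n, M i' j' ^ 2 :=
        Finset.single_le_sum (f := fun i' => ∑ j' : Fin n, M i' j' ^ 2)
          (fun k _ => Finset.sum_nonneg fun _ _ => sq_nonneg _) (Finset.mem_univ i)

lemma frob_smul {n : ℕ} (c : ℝ) (M : Matrix (Fin n) (Fin n) ℝ) :
    frob (c • M) = |c| * frob M := by
  unfold frob
  have : ∑ i : Fin n, ∑ j : Fin n, ((c • M) i j) ^ 2
      = c ^ 2 * ∑ i : Fin n, ∑ j : Fin n, (M i j) ^ 2 := by
    simp [Finset.mul_sum, mul_pow]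
  rw [this, Real.sqrt_mul (sq_nonneg c), Real.sqrt_sq_eq_abs]

lemma frob_eq_norm {n : ℕ} (M : Matrix (Fin n) (Fin n) ℝ) :
    frob M = ‖(WithLp.equiv 2 (Fin n × Fin n → ℝ)).symm (fun p => M p.1 p.2)‖ := by
  rw [EuclideanSpace.norm_eq, frob, Fintype.sum_prod_type]
  congr 1
  refine Finset.sum_congr rfl fun i _ => Finset.sum_congr rfl fun j _ => ?_
  simp [sq_abs]

lemma frob_add_le {n : ℕ} (A B : Matrix (Fin n) (Fin n) ℝ) :
    frob (A + B) ≤ frob A + frob B := by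
  rw [frob_eq_norm, frob_eq_norm, frob_eq_norm]
  have : ((WithLp.equiv 2 (Fin n × Fin n → ℝ)).symm (fun p => (A + B) p.1 p.2))
      = (WithLp.equiv 2 (Fin n × Fin n → ℝ)).symm (fun p => A p.1 p.2)
        + (WithLp.equiv 2 (Fin n × Fin n → ℝ)).symm (fun p => B p.1 p.2) := by
    ext p; simp [Matrix.add_apply]
  rw [this]
  exact norm_add_le _ _

lemma frob_neg {n : ℕ} (A : Matrix (Fin n) (Fin n) ℝ) : frob (-A) = frob A := by
  unfold frob; congr 1; simp

lemma frob_sub_le {n : ℕ} (A B : Matrix (Fin n) (Fin n) ℝ) :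
    frob (A - B) ≤ frob A + frob B := by
  rw [sub_eq_add_neg]
  calc frob (A + -B) ≤ frob A + frob (-B) := frob_add_le _ _
    _ = frob A + frob B := by rw [frob_neg]

lemma frob_mul_le {n : ℕ} (A B : Matrix (Fin n) (Fin n) ℝ) :
    frob (A * B) ≤ frob A * frob B := by
  have key : ∑ i : Fin n, ∑ j : Fin n, ((A * B) i j) ^ 2
      ≤ (∑ i : Fin n, ∑ j : Fin n, (A i j) ^ 2) * (∑ i : Fin n, ∑ j : Fin n, (B i j) ^ 2) := by
    calc ∑ i : Fin n, ∑ j : Fin n, ((A * B) i j) ^ 2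
        ≤ ∑ i : Fin n, ∑ j : Fin n,
            (∑ k : Fin n, (A i k) ^ 2) * (∑ k : Fin n, (B k j) ^ 2) := by
          refine Finset.sum_le_sum fun i _ => Finset.sum_le_sum fun j _ => ?_
          have := Finset.sum_mul_sq_le_sq_mul_sq Finset.univ (fun k => A i k) (fun k => B k j)
          simpa [Matrix.mul_apply] using this
      _ = (∑ i : Fin n, ∑ j : Fin n, (A i j) ^ 2) * (∑ i : Fin n, ∑ j : Fin n, (B i j) ^ 2) := by
          rw [Finset.sum_mul]
          refine Finset.sum_congr rfl fun i _ => ?_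
          rw [← Finset.mul_sum, Finset.sum_comm (γ := Fin n)]
  have h2 : frob (A * B) ^ 2 ≤ (frob A * frob B) ^ 2 := by
    rw [frob_sq, mul_pow, frob_sq, frob_sq]; exact key
  have h3 := Real.sqrt_le_sqrt h2
  rwa [Real.sqrt_sq (frob_nonneg _), Real.sqrt_sq (mul_nonneg (frob_nonneg _) (frob_nonneg _))] at h3

lemma sumSq_eq_trace {n : ℕ} (M : Matrix (Fin n) (Fin n) ℝ) :
    ∑ i : Fin n, ∑ j : Fin n, (M i j) ^ 2 = Matrix.trace (Mᵀ * M) := by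
  rw [Matrix.trace, Finset.sum_comm]
  refine Finset.sum_congr rfl fun j _ => ?_
  simp [Matrix.mul_apply, Matrix.diag, pow_two]

lemma sumSq_eq_trace' {n : ℕ} (M : Matrix (Fin n) (Fin n) ℝ) :
    ∑ i : Fin n, ∑ j : Fin n, (M i j) ^ 2 = Matrix.trace (M * Mᵀ) := by
  rw [Matrix.trace]
  refine Finset.sum_congr rfl fun i _ => ?_
  simp [Matrix.mul_apply, Matrix.diag, pow_two]

lemma frob_conj_left {n : ℕ} {A : Matrix (Fin n) (Fin n) ℝ} (M : Matrix (Fin n) (Fin n) ℝ)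
    (hA : Aᵀ * A = 1) : frob (A * M) = frob M := by
  unfold frob
  congr 1
  rw [sumSq_eq_trace, sumSq_eq_trace, Matrix.transpose_mul, Matrix.mul_assoc,
    ← Matrix.mul_assoc Aᵀ A M, hA, Matrix.one_mul]

lemma frob_conj_right {n : ℕ} {B : Matrix (Fin n) (Fin n) ℝ} (M : Matrix (Fin n) (Fin n) ℝ)
    (hB : B * Bᵀ = 1) : frob (M * B) = frob M := by
  unfold frob
  congr 1
  rw [sumSq_eq_trace', sumSq_eq_trace', Matrix.transpose_mul, Matrix.mul_assoc,
    ← Matrix.mul_assoc B Bᵀ Mᵀ, hB, Matrix.one_mul]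



lemma phiMu_quadratic {μ : ℝ} (hμ : 0 < μ) (t : ℝ) :
    phiMu μ t ^ 2 - t * phiMu μ t = μ := by
  have h : Real.sqrt (t ^ 2 + 4 * μ) ^ 2 = t ^ 2 + 4 * μ := Real.sq_sqrt (by positivity)
  unfold phiMu
  nlinarith [h]

lemma sqrt_ge {μ : ℝ} (hμ : 0 < μ) (t : ℝ) :
    2 * Real.sqrt μ ≤ Real.sqrt (t ^ 2 + 4 * μ) := by
  have h4 : Real.sqrt (4 * μ) = 2 * Real.sqrt μ := by
    rw [show (4:ℝ) * μ = (2 * Real.sqrt μ) ^ 2 by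
      rw [mul_pow, Real.sq_sqrt hμ.le]; ring]
    exact Real.sqrt_sq (by positivity)
  rw [← h4]
  exact Real.sqrt_le_sqrt (by nlinarith [sq_nonneg t])

lemma phiMu_lipschitz {μ : ℝ} (hμ : 0 < μ) (a b : ℝ) :
    |phiMu μ a - phiMu μ b| ≤ |a - b| := by
  set sa := Real.sqrt (a ^ 2 + 4 * μ) with hsa
  set sb := Real.sqrt (b ^ 2 + 4 * μ) with hsb
  have hsa2 : sa ^ 2 = a ^ 2 + 4 * μ := Real.sq_sqrt (by positivity)
  have hsb2 : sb ^ 2 = b ^ 2 + 4 * μ := Real.sq_sqrt (by positivity)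
  have hsa0 : 0 ≤ sa := Real.sqrt_nonneg _
  have hsb0 : 0 ≤ sb := Real.sqrt_nonneg _
  have haa : |a| ≤ sa := by
    rw [← Real.sqrt_sq_eq_abs]; exact Real.sqrt_le_sqrt (by nlinarith)
  have hbb : |b| ≤ sb := by
    rw [← Real.sqrt_sq_eq_abs]; exact Real.sqrt_le_sqrt (by nlinarith)
  have hprod : a * b + 4 * μ ≤ sa * sb := by
    have h1 : |a| * |b| ≤ sa * sb := mul_le_mul haa hbb (abs_nonneg _) hsa0
    have h2 : -(sa * sb) ≤ a * b := by
      rw [← abs_mul] at h1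
      nlinarith [neg_abs_le (a * b)]
    nlinarith [sq_nonneg (a - b), sq_nonneg (sa * sb - a * b - 4 * μ),
      sq_nonneg (sa * sb + a * b + 4 * μ), hμ]
  have key : |sa - sb| ≤ |a - b| := by
    rw [← Real.sqrt_sq_eq_abs, ← Real.sqrt_sq_eq_abs]
    apply Real.sqrt_le_sqrt
    nlinarith [hprod]
  have hphi : phiMu μ a - phiMu μ b = ((sa - sb) + (a - b)) / 2 := by
    unfold phiMu; rw [← hsa, ← hsb]; ring
  rw [hphi]
  calc |((sa - sb) + (a - b)) / 2| ≤ (|sa - sb| + |a - b|) / 2 := by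
        rw [abs_div]; simp only [abs_two]
        exact div_le_div_of_nonneg_right (abs_add_le _ _) (by norm_num)
    _ ≤ |a - b| := by linarith



lemma conjBy_mul {n : ℕ} {P : Matrix (Fin n) (Fin n) ℝ} (hP' : P * Pᵀ = 1)
    (M N : Matrix (Fin n) (Fin n) ℝ) :
    Pᵀ * (M * N) * P = (Pᵀ * M * P) * (Pᵀ * N * P) := by
  have h1 : ∀ K : Matrix (Fin n) (Fin n) ℝ, P * (Pᵀ * K) = K := fun K => by
    rw [← Matrix.mul_assoc, hP', Matrix.one_mul]
  calc Pᵀ * (M * N) * P = Pᵀ * (M * (P * (Pᵀ * (N * P)))) := by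
        rw [h1]; simp only [Matrix.mul_assoc]
    _ = (Pᵀ * M * P) * (Pᵀ * N * P) := by simp only [Matrix.mul_assoc]

lemma conj_diag_mul {n : ℕ} {Q : Matrix (Fin n) (Fin n) ℝ} (hQ : Qᵀ * Q = 1)
    (a b : Fin n → ℝ) :
    (Q * Matrix.diagonal a * Qᵀ) * (Q * Matrix.diagonal b * Qᵀ)
      = Q * Matrix.diagonal (fun i => a i * b i) * Qᵀ := by
  have h1 : ∀ K : Matrix (Fin n) (Fin n) ℝ, Qᵀ * (Q * K) = K := fun K => by
    rw [← Matrix.mul_assoc, hQ, Matrix.one_mul]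
  calc (Q * Matrix.diagonal a * Qᵀ) * (Q * Matrix.diagonal b * Qᵀ)
      = Q * (Matrix.diagonal a * (Qᵀ * (Q * (Matrix.diagonal b * Qᵀ)))) := by
        simp only [Matrix.mul_assoc]
    _ = Q * (Matrix.diagonal a * Matrix.diagonal b) * Qᵀ := by
        rw [h1]; simp only [Matrix.mul_assoc]
    _ = Q * Matrix.diagonal (fun i => a i * b i) * Qᵀ := by
        rw [Matrix.diagonal_mul_diagonal]

lemma diag_const_eq {n : ℕ} (μ : ℝ) :
    Matrix.diagonal (fun _ : Fin n => μ) = μ • (1 : Matrix (Fin n) (Fin n) ℝ) := by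
  ext i j
  by_cases h : i = j <;> simp [Matrix.diagonal_apply, Matrix.one_apply, h]

lemma quad_id {n : ℕ} {μ : ℝ} (hμ : 0 < μ) {Q : Matrix (Fin n) (Fin n) ℝ}
    (hQ : Qᵀ * Q = 1) (hQ' : Q * Qᵀ = 1) (e : Fin n → ℝ) :
    (Q * Matrix.diagonal (fun i => phiMu μ (e i)) * Qᵀ)
        * (Q * Matrix.diagonal (fun i => phiMu μ (e i)) * Qᵀ)
      - (Q * Matrix.diagonal e * Qᵀ) * (Q * Matrix.diagonal (fun i => phiMu μ (e i)) * Qᵀ)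
      = μ • (1 : Matrix (Fin n) (Fin n) ℝ) := by
  rw [conj_diag_mul hQ, conj_diag_mul hQ, ← Matrix.sub_mul, ← Matrix.mul_sub,
    Matrix.diagonal_sub]
  have : (fun i => phiMu μ (e i) * phiMu μ (e i) - e i * phiMu μ (e i))
      = fun _ : Fin n => μ := by
    funext i
    have := phiMu_quadratic hμ (e i)
    nlinarith [this]
  rw [this, diag_const_eq, Matrix.mul_smul, Matrix.smul_mul, Matrix.mul_one, hQ']

lemma mul_comm_conj_diag {n : ℕ} {Q : Matrix (Fin n) (Fin n) ℝ} (hQ : Qᵀ * Q = 1)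
    (a b : Fin n → ℝ) :
    (Q * Matrix.diagonal a * Qᵀ) * (Q * Matrix.diagonal b * Qᵀ)
      = (Q * Matrix.diagonal b * Qᵀ) * (Q * Matrix.diagonal a * Qᵀ) := by
  rw [conj_diag_mul hQ, conj_diag_mul hQ]
  congr 1
  ext i j
  simp [Matrix.diagonal_apply, mul_comm]

set_option maxHeartbeats 2000000 in
/-- Fréchet differentiability of `φ_μ^+` on symmetric matrices.
Let `Φ` satisfy the spectral property `Φ(P Diag(d) Pᵀ) = P Diag(φ_μ(d)) Pᵀ` for all
orthogonal `P` and all `d`.  Fix `X = P Diag(d) Pᵀ` with `P` orthogonal, and let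
`Ω_{ij} = (φ_μ(d_i) + φ_μ(d_j))/(√(d_i² + 4μ) + √(d_j² + 4μ))`.  Then `Φ` is Fréchet
differentiable at `X` within the symmetric matrices, with derivative
`H ↦ P(Ω ∘ (PᵀHP))Pᵀ` (Hadamard product `∘`):
`‖Φ(X + H) − Φ(X) − P(Ω ∘ (PᵀHP))Pᵀ‖_F / ‖H‖_F → 0` as symmetric `H → 0`. -/
theorem phi_matrix_frechet_derivative (n : ℕ) (hn : 1 ≤ n) (μ : ℝ) (hμ : 0 < μ)
    (Φ : Matrix (Fin n) (Fin n) ℝ → Matrix (Fin n) (Fin n) ℝ)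
    (hΦ : ∀ (P : Matrix (Fin n) (Fin n) ℝ) (d : Fin n → ℝ), Pᵀ * P = 1 →
      Φ (P * Matrix.diagonal d * Pᵀ) = P * Matrix.diagonal (fun i => phiMu μ (d i)) * Pᵀ)
    (X P : Matrix (Fin n) (Fin n) ℝ) (d : Fin n → ℝ) (hP : Pᵀ * P = 1)
    (hX : X = P * Matrix.diagonal d * Pᵀ)
    (Ω : Matrix (Fin n) (Fin n) ℝ)
    (hΩ : ∀ i j : Fin n, Ω i j = (phiMu μ (d i) + phiMu μ (d j))
        / (Real.sqrt ((d i) ^ 2 + 4 * μ) + Real.sqrt ((d j) ^ 2 + 4 * μ))) :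
    ∀ ε : ℝ, 0 < ε → ∃ δ : ℝ, 0 < δ ∧
      ∀ H : Matrix (Fin n) (Fin n) ℝ, H.IsSymm → H ≠ 0 → frob H < δ →
        frob (Φ (X + H) - Φ X - P * (Matrix.hadamard Ω (Pᵀ * H * P)) * Pᵀ) / frob H
          < ε := by
  intro ε hε
  have hsμ : 0 < Real.sqrt μ := Real.sqrt_pos.mpr hμ
  refine ⟨Real.sqrt μ * ε, by positivity, ?_⟩
  intro H hHsymm hHne hHδ
  have hH0 : 0 < frob H := frob_pos hHne
  -- orthogonality facts
  have hP' : P * Pᵀ = 1 := mul_eq_one_comm.mp hP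
  have hPPt : (Pᵀ)ᵀ * Pᵀ = 1 := by rw [Matrix.transpose_transpose]; exact hP'
  have hPt2 : Pᵀ * (Pᵀ)ᵀ = 1 := by rw [Matrix.transpose_transpose]; exact hP
  have hPcollapse : ∀ K : Matrix (Fin n) (Fin n) ℝ, Pᵀ * (P * K) = K := fun K => by
    rw [← Matrix.mul_assoc, hP, Matrix.one_mul]
  have hPcollapse' : ∀ K : Matrix (Fin n) (Fin n) ℝ, P * (Pᵀ * K) = K := fun K => by
    rw [← Matrix.mul_assoc, hP', Matrix.one_mul]
  -- eigendecomposition of X + H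
  have hXsymm : Xᵀ = X := by
    rw [hX, Matrix.transpose_mul, Matrix.transpose_mul, Matrix.transpose_transpose,
      Matrix.diagonal_transpose, Matrix.mul_assoc]
  have hA : (X + H).IsHermitian := by
    rw [Matrix.IsHermitian, Matrix.conjTranspose_eq_transpose_of_trivial,
      Matrix.transpose_add, hXsymm, hHsymm]
  set Q : Matrix (Fin n) (Fin n) ℝ :=
    (Matrix.IsHermitian.eigenvectorUnitary hA : Matrix (Fin n) (Fin n) ℝ) with hQdef
  set e : Fin n → ℝ := hA.eigenvalues with hedef
  have hQ : Qᵀ * Q = 1 := by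
    have h := Unitary.coe_star_mul_self (Matrix.IsHermitian.eigenvectorUnitary hA)
    simpa [Matrix.star_eq_conjTranspose, Matrix.conjTranspose_eq_transpose_of_trivial]
      using h
  have hQ' : Q * Qᵀ = 1 := mul_eq_one_comm.mp hQ
  have hQcollapse : ∀ K : Matrix (Fin n) (Fin n) ℝ, Qᵀ * (Q * K) = K := fun K => by
    rw [← Matrix.mul_assoc, hQ, Matrix.one_mul]
  have hdecomp : X + H = Q * Matrix.diagonal e * Qᵀ := by
    have h := hA.spectral_theorem
    simpa [Matrix.star_eq_conjTranspose, Matrix.conjTranspose_eq_transpose_of_trivial,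
      RCLike.ofReal_real_eq_id, Function.comp_id] using h
  set φd : Fin n → ℝ := fun i => phiMu μ (d i) with hφd
  set φe : Fin n → ℝ := fun i => phiMu μ (e i) with hφe
  set Y : Matrix (Fin n) (Fin n) ℝ := P * Matrix.diagonal φd * Pᵀ with hYdef
  set Z : Matrix (Fin n) (Fin n) ℝ := Q * Matrix.diagonal φe * Qᵀ with hZdef
  have hY : Φ X = Y := by rw [hX]; exact hΦ P d hP
  have hZ : Φ (X + H) = Z := by rw [hdecomp]; exact hΦ Q e hQ
  set E : Matrix (Fin n) (Fin n) ℝ := Z - Y with hEdef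
  set G : Matrix (Fin n) (Fin n) ℝ := Pᵀ * H * P with hGdef
  set F : Matrix (Fin n) (Fin n) ℝ := Pᵀ * E * P with hFdef
  -- Frobenius norm invariances
  have hfrG : frob G = frob H := by
    rw [hGdef, frob_conj_right (Pᵀ * H) hP', frob_conj_left H hPPt]
  have hfrF : frob F = frob E := by
    rw [hFdef, frob_conj_right (Pᵀ * E) hP', frob_conj_left E hPPt]
  -- Lipschitz estimate: frob E ≤ frob H
  have hEQ : Pᵀ * E * Q = (Pᵀ * Q) * Matrix.diagonal φe - Matrix.diagonal φd * (Pᵀ * Q) := by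
    rw [hEdef, hZdef, hYdef, Matrix.mul_sub, Matrix.sub_mul]
    simp only [Matrix.mul_assoc, hPcollapse, hQ, Matrix.mul_one]
  have hHeq : H = Q * Matrix.diagonal e * Qᵀ - P * Matrix.diagonal d * Pᵀ := by
    rw [← hdecomp, ← hX, add_sub_cancel_left]
  have hHQ : Pᵀ * H * Q = (Pᵀ * Q) * Matrix.diagonal e - Matrix.diagonal d * (Pᵀ * Q) := by
    conv_lhs => rw [hHeq]
    rw [Matrix.mul_sub, Matrix.sub_mul]
    simp only [Matrix.mul_assoc, hPcollapse, hQ, Matrix.mul_one]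
  have hEH : frob E ≤ frob H := by
    have h1 : frob (Pᵀ * E * Q) = frob E := by
      rw [frob_conj_right (Pᵀ * E) hQ', frob_conj_left E hPPt]
    have h2 : frob (Pᵀ * H * Q) = frob H := by
      rw [frob_conj_right (Pᵀ * H) hQ', frob_conj_left H hPPt]
    rw [← h1, ← h2]
    apply frob_mono
    intro i j
    have e1 : (Pᵀ * E * Q) i j = (φe j - φd i) * (Pᵀ * Q) i j := by
      rw [hEQ]
      simp only [Matrix.sub_apply, Matrix.mul_diagonal, Matrix.diagonal_mul]
      ring
    have e2 : (Pᵀ * H * Q) i j = (e j - d i) * (Pᵀ * Q) i j := by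
      rw [hHQ]
      simp only [Matrix.sub_apply, Matrix.mul_diagonal, Matrix.diagonal_mul]
      ring
    rw [e1, e2, abs_mul, abs_mul]
    exact mul_le_mul_of_nonneg_right (phiMu_lipschitz hμ (e j) (d i)) (abs_nonneg _)
  -- the quadratic matrix identity, conjugated
  set Dm : Matrix (Fin n) (Fin n) ℝ := Matrix.diagonal d with hDm
  set Λ : Matrix (Fin n) (Fin n) ℝ := Matrix.diagonal φd with hΛ
  have hconjY : Pᵀ * Y * P = Λ := by
    rw [hYdef]
    simp only [Matrix.mul_assoc, hPcollapse, hP, Matrix.mul_one]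
  have hconjX : Pᵀ * X * P = Dm := by
    rw [hX]
    simp only [Matrix.mul_assoc, hPcollapse, hP, Matrix.mul_one]
  have hconjZ : Pᵀ * Z * P = Λ + F := by
    rw [hFdef, hEdef, Matrix.mul_sub, Matrix.sub_mul, hconjY]
    abel
  have hconjXH : Pᵀ * (X + H) * P = Dm + G := by
    rw [Matrix.mul_add, Matrix.add_mul, hconjX]
  have hzq : Z * Z - (X + H) * Z = μ • (1 : Matrix (Fin n) (Fin n) ℝ) := by
    rw [hdecomp, hZdef]
    exact quad_id hμ hQ hQ' e
  have hzcomm : (X + H) * Z = Z * (X + H) := by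
    rw [hdecomp, hZdef]
    exact mul_comm_conj_diag hQ _ _
  have hrhs : Pᵀ * (μ • (1 : Matrix (Fin n) (Fin n) ℝ)) * P = μ • 1 := by
    rw [Matrix.mul_smul, Matrix.smul_mul, Matrix.mul_one, hP]
  have hAq : (Λ + F) * (Λ + F) - (Dm + G) * (Λ + F) = μ • 1 := by
    have h := congrArg (fun M => Pᵀ * M * P) hzq
    simp only [Matrix.mul_sub, Matrix.sub_mul] at h
    rw [conjBy_mul hP' Z Z, conjBy_mul hP' (X + H) Z, hconjZ, hconjXH, hrhs] at h
    exact h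
  have hAcomm : (Dm + G) * (Λ + F) = (Λ + F) * (Dm + G) := by
    have h := congrArg (fun M => Pᵀ * M * P) hzcomm
    rw [conjBy_mul hP' (X + H) Z, conjBy_mul hP' Z (X + H), hconjZ, hconjXH] at h
    exact h
  have hyq : Λ * Λ - Dm * Λ = μ • (1 : Matrix (Fin n) (Fin n) ℝ) := by
    rw [hΛ, hDm, Matrix.diagonal_mul_diagonal, Matrix.diagonal_mul_diagonal,
      Matrix.diagonal_sub]
    have hfun : (fun i : Fin n => φd i * φd i - d i * φd i) = fun _ : Fin n => μ := by
      funext i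
      have hq := phiMu_quadratic hμ (d i)
      simp only [hφd]
      nlinarith [hq]
    rw [hfun, diag_const_eq]
  have hycomm : Dm * Λ = Λ * Dm := by
    rw [hΛ, hDm, Matrix.diagonal_mul_diagonal, Matrix.diagonal_mul_diagonal]
    exact congrArg Matrix.diagonal (funext fun i => mul_comm (d i) (φd i))
  have hAq2 : (Λ + F) * (Λ + F) - (Λ + F) * (Dm + G) = μ • 1 := by
    rw [← hAcomm]; exact hAq
  have hyq2 : Λ * Λ - Λ * Dm = μ • 1 := by rw [← hycomm]; exact hyq
  have comb : ((Λ + F) * (Λ + F) - (Dm + G) * (Λ + F))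
      + ((Λ + F) * (Λ + F) - (Λ + F) * (Dm + G))
      - (Λ * Λ - Dm * Λ) - (Λ * Λ - Λ * Dm) = 0 := by
    rw [hAq, hAq2, hyq, hyq2]
    abel
  have keyMat : Λ * F + F * Λ + Λ * F + F * Λ - Dm * F - F * Dm
      - (Λ * G + G * Λ + G * F + F * G - F * F - F * F) = 0 := by
    rw [← comb]
    noncomm_ring
  set N : Matrix (Fin n) (Fin n) ℝ := G * F + F * G - (F * F + F * F) with hNdef
  set s : Fin n → ℝ := fun i => Real.sqrt (d i ^ 2 + 4 * μ) with hsdef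
  have hsphi : ∀ i, s i = 2 * φd i - d i := fun i => by
    simp only [hsdef, hφd, phiMu]
    ring
  have keyEntry : ∀ i j, (s i + s j) * F i j = (φd i + φd j) * G i j + N i j := by
    intro i j
    have h := Matrix.ext_iff.mpr keyMat i j
    simp only [hΛ, hDm, Matrix.sub_apply, Matrix.add_apply, Matrix.diagonal_mul,
      Matrix.mul_diagonal, Matrix.zero_apply] at h
    rw [hNdef]
    simp only [Matrix.add_apply, Matrix.sub_apply]
    rw [hsphi i, hsphi j]
    linear_combination h
  have hsb : ∀ i, 2 * Real.sqrt μ ≤ s i := fun i => sqrt_ge hμ (d i)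
  have hspos : ∀ i j, (0:ℝ) < s i + s j := fun i j => by
    have := hsb i; have := hsb j; linarith
  have hΩG : ∀ i j, F i j - Ω i j * G i j = N i j / (s i + s j) := by
    intro i j
    have hsd : ∀ k, Real.sqrt (d k ^ 2 + 4 * μ) = s k := fun k => rfl
    have hpd : ∀ k, phiMu μ (d k) = φd k := fun k => rfl
    rw [hΩ i j, hsd i, hsd j, hpd i, hpd j, eq_div_iff (hspos i j).ne']
    have hk := keyEntry i j
    linear_combination hk - (φd i + φd j) * G i j * mul_inv_cancel₀ (hspos i j).ne'
  have h4pos : (0:ℝ) < 4 * Real.sqrt μ := by positivity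
  have hTb : frob (F - Matrix.hadamard Ω G) ≤ (4 * Real.sqrt μ)⁻¹ * frob N := by
    have h1 : frob (F - Matrix.hadamard Ω G) ≤ frob ((4 * Real.sqrt μ)⁻¹ • N) := by
      apply frob_mono
      intro i j
      have h2 : (F - Matrix.hadamard Ω G) i j = N i j / (s i + s j) := by
        simp only [Matrix.sub_apply, Matrix.hadamard_apply]
        exact hΩG i j
      rw [h2, Matrix.smul_apply, smul_eq_mul, abs_div, abs_mul,
        abs_of_pos (hspos i j), abs_of_pos (inv_pos.mpr h4pos), inv_mul_eq_div]
      gcongr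
      linarith [hsb i, hsb j]
    rw [frob_smul, abs_of_pos (inv_pos.mpr h4pos)] at h1
    exact h1
  have hF : frob F ≤ frob H := by rw [hfrF]; exact hEH
  have hNb : frob N ≤ 4 * (frob H * frob H) := by
    have hGF : frob (G * F) ≤ frob H * frob H := by
      calc frob (G * F) ≤ frob G * frob F := frob_mul_le _ _
        _ ≤ frob H * frob H := by
            rw [hfrG]
            exact mul_le_mul_of_nonneg_left hF (frob_nonneg _)
    have hFG : frob (F * G) ≤ frob H * frob H := by
      calc frob (F * G) ≤ frob F * frob G := frob_mul_le _ _
        _ ≤ frob H * frob H := by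
            rw [hfrG]
            exact mul_le_mul_of_nonneg_right hF (frob_nonneg _)
    have hFF : frob (F * F) ≤ frob H * frob H := by
      calc frob (F * F) ≤ frob F * frob F := frob_mul_le _ _
        _ ≤ frob H * frob H := mul_le_mul hF hF (frob_nonneg _) (frob_nonneg _)
    calc frob N ≤ frob (G * F + F * G) + frob (F * F + F * F) := frob_sub_le _ _
      _ ≤ (frob (G * F) + frob (F * G)) + (frob (F * F) + frob (F * F)) :=
          add_le_add (frob_add_le _ _) (frob_add_le _ _)
      _ ≤ 4 * (frob H * frob H) := by linarith
  have hPFP : P * F * Pᵀ = E := by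
    rw [hFdef]
    simp only [Matrix.mul_assoc, hPcollapse', hP', Matrix.mul_one]
  have hTarget : Φ (X + H) - Φ X - P * (Matrix.hadamard Ω (Pᵀ * H * P)) * Pᵀ
      = P * (F - Matrix.hadamard Ω G) * Pᵀ := by
    rw [hZ, hY, Matrix.mul_sub, Matrix.sub_mul, hPFP, hEdef, hGdef]
  rw [hTarget]
  have hfrT : frob (P * (F - Matrix.hadamard Ω G) * Pᵀ) = frob (F - Matrix.hadamard Ω G) := by
    rw [frob_conj_right (P * (F - Matrix.hadamard Ω G)) hPt2, frob_conj_left _ hP]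
  rw [hfrT, div_lt_iff₀ hH0]
  have hchain : frob (F - Matrix.hadamard Ω G) ≤ frob H * frob H / Real.sqrt μ := by
    calc frob (F - Matrix.hadamard Ω G) ≤ (4 * Real.sqrt μ)⁻¹ * frob N := hTb
      _ ≤ (4 * Real.sqrt μ)⁻¹ * (4 * (frob H * frob H)) :=
          mul_le_mul_of_nonneg_left hNb (by positivity)
      _ = frob H * frob H / Real.sqrt μ := by
          field_simp
  calc frob (F - Matrix.hadamard Ω G) ≤ frob H * frob H / Real.sqrt μ := hchain
    _ < ε * frob H := by
        rw [div_lt_iff₀ hsμ]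
        nlinarith [hHδ, hH0, hsμ]
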